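/- Let $\mathcal{E} \geq 2$, let $\mathcal{U}, \mathcal{F} \in \mathbb{C}[\alpha_1,\ldots,\alpha_\mathcal{E}]$ be homogeneous of degrees $\L$ and $\L+1$ respectively, set $\mathcal{G} = \mathcal{U}+\mathcal{F}$, and set $\mathcal{H}(\alpha_1,\ldots,\alpha_{\mathcal{E}-1},y) = \mathcal{U}(\alpha_1,\ldots,\alpha_{\mathcal{E}-1},1) + y \cdot \mathcal{F}(\alpha_1,\ldots,\alpha_{\mathcal{E}-1},1)$. Then for every point $\bar{\alpha} = (\alpha_1,\ldots,\alpha_{\mathcal{E}-1},y)$ with all coordinates nonzero, the point $\bar{\alpha}$ satisfies $\mathcal{H}(\bar{\alpha}) = 0$ and $\partial \mathcal{H}/\partial \alpha_j(\bar{\alpha}) = 0$ for $j = 1,\ldots,\mathcal{E}-1$ and $\partial \mathcal{H}/\partial y(\bar{\alpha}) = 0$, if and only if the point $\varphi(\bar{\alpha}) = (y\alpha_1,\ldots,y\alpha_{\mathcal{E}-1},y)$ satisfies $\mathcal{G}(\varphi(\bar{\alpha})) = 0$ and $\partial \mathcal{G}/\partial \alpha_i(\varphi(\bar{\alpha}))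 = 0$ for $i = 1,\ldots,\mathcal{E}$. -/

import Mathlib

open MvPolynomial

/-- The map `φ : (α₁,…,α_{E-1}, y) ↦ (yα₁,…,yα_{E-1}, y)`, where the last
coordinate plays the role of `y` and `E = n + 1`. -/
def phiMap (n : ℕ) : (Fin (n + 1) → ℂ) → (Fin (n + 1) → ℂ) :=
  fun α i => if i = Fin.last n then α (Fin.last n) else α (Fin.last n) * α i

/-- Dehomogenization of a polynomial in `E = n+1` variables with respect to the
last variable: substitute `1` for the last variable (the result is regarded as a
polynomial in all `E` variables, not involving the last one). -/
noncomputable def dehom (n : ℕ) (P : MvPolynomial (Fin (n + 1)) ℂ) :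
    MvPolynomial (Fin (n + 1)) ℂ :=
  aeval (fun i : Fin (n + 1) => if i = Fin.last n then 1 else X i) P

namespace Stmt1Aux

variable {σ : Type*}

lemma degree_eq_sum_univ [Fintype σ] (d : σ →₀ ℕ) : d.degree = ∑ i, d i := by
  rw [Finsupp.degree]
  exact Finset.sum_subset (Finset.subset_univ _)
    (fun i _ hi => Finsupp.notMem_support_iff.mp hi)

lemma degree_of_mem_support {P : MvPolynomial σ ℂ} {d : ℕ} (hP : P.IsHomogeneous d)
    {s : σ →₀ ℕ} (hs : s ∈ P.support) : s.degree = d := by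
  rw [Finsupp.degree_eq_weight_one]
  exact hP (mem_support_iff.mp hs)

lemma eval_smul_of_isHomogeneous [Fintype σ] {P : MvPolynomial σ ℂ} {d : ℕ}
    (hP : P.IsHomogeneous d) (c : ℂ) (x : σ → ℂ) :
    eval (fun i => c * x i) P = c ^ d * eval x P := by
  rw [eval_eq', eval_eq', Finset.mul_sum]
  refine Finset.sum_congr rfl fun s hs => ?_
  have hdeg : ∑ i, s i = d := by
    rw [← degree_eq_sum_univ, degree_of_mem_support hP hs]
  calc coeff s P * ∏ i, (c * x i) ^ s i
      = coeff s P * ((∏ i, c ^ s i) * ∏ i, x i ^ s i) := by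
        rw [← Finset.prod_mul_distrib]; simp_rw [mul_pow]
    _ = c ^ d * (coeff s P * ∏ i, x i ^ s i) := by
        rw [Finset.prod_pow_eq_pow_sum, hdeg]; ring

lemma X_mul_pderiv_monomial [DecidableEq σ] (i : σ) (s : σ →₀ ℕ) (a : ℂ) :
    X i * pderiv i (monomial s a) = monomial s (a * s i) := by
  rw [pderiv_monomial, X, monomial_mul, one_mul]
  rcases Nat.eq_zero_or_pos (s i) with h | h
  · simp [h]
  · congr 1
    rw [add_tsub_cancel_of_le (Finsupp.single_le_iff.mpr h)]

lemma euler [Fintype σ] [DecidableEq σ] {P : MvPolynomial σ ℂ} {d : ℕ}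
    (hP : P.IsHomogeneous d) (x : σ → ℂ) :
    ∑ i, x i * eval x (pderiv i P) = (d : ℂ) * eval x P := by
  have key : ∑ i, X i * pderiv i P = C (d : ℂ) * P := by
    conv_lhs => rw [P.as_sum]
    conv_rhs => rw [P.as_sum]
    simp_rw [map_sum, Finset.mul_sum]
    rw [Finset.sum_comm]
    refine Finset.sum_congr rfl fun s hs => ?_
    simp_rw [X_mul_pderiv_monomial, C_mul_monomial]
    rw [← map_sum (monomial s)]
    congr 1
    have hdeg : ∑ i, (s i : ℂ) = (d : ℂ) := by
      rw [← Nat.cast_sum, ← degree_eq_sum_univ, degree_of_mem_support hP hs]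
    rw [← Finset.mul_sum, hdeg, mul_comm]
  calc ∑ i, x i * eval x (pderiv i P)
      = eval x (∑ i, X i * pderiv i P) := by simp
    _ = (d : ℂ) * eval x P := by rw [key]; simp

lemma smul_eval_pderiv [Fintype σ] [DecidableEq σ] {P : MvPolynomial σ ℂ} {d : ℕ}
    (hP : P.IsHomogeneous d) (c : ℂ) (x : σ → ℂ) (i : σ) :
    c * eval (fun j => c * x j) (pderiv i P) = c ^ d * eval x (pderiv i P) := by
  conv_lhs => rw [P.as_sum]
  conv_rhs => rw [P.as_sum]
  simp_rw [map_sum, Finset.mul_sum]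
  refine Finset.sum_congr rfl fun s hs => ?_
  rw [pderiv_monomial]
  rcases Nat.eq_zero_or_pos (s i) with h | h
  · simp [h]
  · have hd : (s - Finsupp.single i 1).degree = d - 1 := by
      have hle : Finsupp.single i 1 ≤ s := Finsupp.single_le_iff.mpr h
      have hsum : (s - Finsupp.single i 1) + Finsupp.single i 1 = s := tsub_add_cancel_of_le hle
      have h1 : s.degree = d := degree_of_mem_support hP hs
      have h2 : (s - Finsupp.single i 1).degree + (Finsupp.single i 1).degree = d := by
        rw [← h1, ← hsum]
        simp [Finsupp.degree_eq_weight_one, map_add]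
      have h3 : (Finsupp.single i 1).degree = 1 := by
        exact Finsupp.degree_single i 1
      omega
    have hd1 : 1 ≤ d := by
      have h1 : s.degree = d := degree_of_mem_support hP hs
      have h2 : s i ≤ s.degree := by
        rw [degree_eq_sum_univ]
        exact Finset.single_le_sum (fun j _ => Nat.zero_le _) (Finset.mem_univ i)
      omega
    rw [eval_smul_of_isHomogeneous (isHomogeneous_monomial _ hd), ← mul_assoc,
        ← pow_succ', Nat.sub_add_cancel hd1]

lemma eval_aeval' (x : σ → ℂ) (g : σ → MvPolynomial σ ℂ) (P : MvPolynomial σ ℂ) :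
    eval x (aeval g P) = eval (fun i => eval x (g i)) P := by
  induction P using MvPolynomial.induction_on with
  | C a => simp
  | add p q hp hq => simp only [map_add, hp, hq]
  | mul_X p i hp => rw [map_mul, aeval_X, eval_mul, hp, eval_mul, eval_X]

end Stmt1Aux

open Stmt1Aux

lemma pderiv_dehom {n : ℕ} (j : Fin (n + 1)) (hj : j ≠ Fin.last n)
    (P : MvPolynomial (Fin (n + 1)) ℂ) :
    pderiv j (dehom n P) = dehom n (pderiv j P) := by
  induction P using MvPolynomial.induction_on with
  | C a => simp [dehom]
  | add p q hp hq =>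
    simp only [dehom] at hp hq ⊢
    simp only [map_add, hp, hq]
  | mul_X p i hp =>
    have key : pderiv j (if i = Fin.last n then (1 : MvPolynomial (Fin (n + 1)) ℂ) else X i)
        = aeval (fun i : Fin (n + 1) =>
            if i = Fin.last n then (1 : MvPolynomial (Fin (n + 1)) ℂ) else X i)
          (pderiv j (X i : MvPolynomial (Fin (n + 1)) ℂ)) := by
      by_cases hi : i = Fin.last n
      · subst hi
        rw [if_pos rfl, pderiv_one, pderiv_X_of_ne (Ne.symm hj), map_zero]
      · rw [if_neg hi]
        by_cases hij : i = j
        · subst hij; rw [pderiv_X_self, map_one]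
        · rw [pderiv_X_of_ne hij, map_zero]
    simp only [dehom] at hp ⊢
    simp only [map_mul, aeval_X, pderiv_mul, map_add, hp, key]

lemma pderiv_last_dehom {n : ℕ} (P : MvPolynomial (Fin (n + 1)) ℂ) :
    pderiv (Fin.last n) (dehom n P) = 0 := by
  induction P using MvPolynomial.induction_on with
  | C a => simp [dehom]
  | add p q hp hq =>
    simp only [dehom] at hp hq ⊢
    simp only [map_add, hp, hq, add_zero]
  | mul_X p i hp =>
    have key : pderiv (Fin.last n)
        (if i = Fin.last n then (1 : MvPolynomial (Fin (n + 1)) ℂ) else X i) = 0 := by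
      by_cases hi : i = Fin.last n
      · rw [if_pos hi, pderiv_one]
      · rw [if_neg hi, pderiv_X_of_ne hi]
    simp only [dehom] at hp ⊢
    simp only [map_mul, aeval_X, pderiv_mul, hp, key, zero_mul, mul_zero, add_zero]

/-- with `𝒢 = 𝒰 + ℱ` and `ℋ = 𝒰̄ + y·ℱ̄` (where `y` is the last
variable), a torus point `ᾱ` is a critical point of `ℋ`
(i.e. `ℋ(ᾱ) = 0` and all partial derivatives of `ℋ` vanish at `ᾱ`)
iff `φ(ᾱ)` is a critical point of `𝒢`. -/
theorem statement1 (n L : ℕ) (hE : 2 ≤ n + 1)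
    (U F : MvPolynomial (Fin (n + 1)) ℂ)
    (hU : U.IsHomogeneous L) (hF : F.IsHomogeneous (L + 1)) :
    ∀ ᾱ : Fin (n + 1) → ℂ, (∀ i, ᾱ i ≠ 0) →
      ((eval ᾱ (dehom n U + X (Fin.last n) * dehom n F) = 0 ∧
        ∀ j : Fin (n + 1),
          eval ᾱ (pderiv j (dehom n U + X (Fin.last n) * dehom n F)) = 0) ↔
       (eval (phiMap n ᾱ) (U + F) = 0 ∧
        ∀ i : Fin (n + 1), eval (phiMap n ᾱ) (pderiv i (U + F)) = 0)) := by
  intro ᾱ hα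
  classical
  set y := ᾱ (Fin.last n) with hy
  have hyne : y ≠ 0 := hα _
  set β : Fin (n + 1) → ℂ := fun i => if i = Fin.last n then 1 else ᾱ i with hβ
  have hβlast : β (Fin.last n) = 1 := by simp [hβ]
  have hphi : phiMap n ᾱ = fun i => y * β i := by
    funext i
    by_cases h : i = Fin.last n <;> simp [phiMap, hβ, h, hy]
  have hdehom : ∀ P : MvPolynomial (Fin (n + 1)) ℂ, eval ᾱ (dehom n P) = eval β P := by
    intro P
    rw [dehom, eval_aeval']
    have hfun : (fun i : Fin (n + 1) =>
        eval ᾱ (if i = Fin.last n then (1 : MvPolynomial (Fin (n + 1)) ℂ) else X i)) = β := by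
      funext i
      by_cases h : i = Fin.last n <;> simp [h, hβ]
    rw [hfun]
  set u := eval β U with hu
  set f := eval β F with hf
  set uj : Fin (n + 1) → ℂ := fun j => eval β (pderiv j U) with huj
  set fj : Fin (n + 1) → ℂ := fun j => eval β (pderiv j F) with hfj
  have hA : eval ᾱ (dehom n U + X (Fin.last n) * dehom n F) = u + y * f := by
    rw [eval_add, eval_mul, eval_X, hdehom, hdehom, ← hy]
  have hAj : ∀ j, j ≠ Fin.last n →
      eval ᾱ (pderiv j (dehom n U + X (Fin.last n) * dehom n F)) = uj j + y * fj j := by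
    intro j hj
    rw [map_add, pderiv_mul, pderiv_X_of_ne (Ne.symm hj), zero_mul, zero_add,
        pderiv_dehom j hj, pderiv_dehom j hj, eval_add, eval_mul, eval_X, hdehom, hdehom, ← hy]
  have hAlast : eval ᾱ (pderiv (Fin.last n) (dehom n U + X (Fin.last n) * dehom n F)) = f := by
    rw [map_add, pderiv_mul, pderiv_X_self, one_mul, pderiv_last_dehom, pderiv_last_dehom,
        mul_zero, add_zero, zero_add, hdehom]
  have hB : eval (phiMap n ᾱ) (U + F) = y ^ L * (u + y * f) := by
    rw [hphi, eval_add, eval_smul_of_isHomogeneous hU, eval_smul_of_isHomogeneous hF]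
    rw [← hu, ← hf]; ring
  have hBj : ∀ j, y * eval (phiMap n ᾱ) (pderiv j (U + F)) = y ^ L * (uj j + y * fj j) := by
    intro j
    rw [hphi, map_add, eval_add, mul_add, smul_eval_pderiv hU, smul_eval_pderiv hF]
    show y ^ L * eval β (pderiv j U) + y ^ (L + 1) * eval β (pderiv j F)
      = y ^ L * (uj j + y * fj j)
    rw [huj, hfj]; ring
  have heuler : ∑ j, β j * (uj j + y * fj j) = (L : ℂ) * (u + y * f) + y * f := by
    have e1 := euler hU β
    have e2 := euler hF β
    have expand : ∑ j, β j * (uj j + y * fj j)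
        = (∑ j, β j * eval β (pderiv j U)) + y * ∑ j, β j * eval β (pderiv j F) := by
      rw [Finset.mul_sum, ← Finset.sum_add_distrib]
      refine Finset.sum_congr rfl fun j _ => ?_
      rw [huj, hfj]; ring
    rw [expand, e1, e2, ← hu, ← hf]
    push_cast
    ring
  constructor
  · rintro ⟨h1, h2⟩
    rw [hA] at h1
    have hf0 : f = 0 := by rw [← hAlast]; exact h2 (Fin.last n)
    have hPj : ∀ j, j ≠ Fin.last n → uj j + y * fj j = 0 := fun j hj => by
      rw [← hAj j hj]; exact h2 j
    have hPlast : uj (Fin.last n) + y * fj (Fin.last n) = 0 := by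
      have hs : ∑ j, β j * (uj j + y * fj j) = uj (Fin.last n) + y * fj (Fin.last n) := by
        rw [Finset.sum_eq_single (Fin.last n)]
        · rw [hβlast, one_mul]
        · intro j _ hj
          rw [hPj j hj, mul_zero]
        · intro habs; exact absurd (Finset.mem_univ _) habs
      rw [heuler, h1, hf0] at hs
      simp at hs
      exact hs.symm
    have hPall : ∀ j, uj j + y * fj j = 0 := by
      intro j
      by_cases hj : j = Fin.last n
      · rw [hj]; exact hPlast
      · exact hPj j hj
    refine ⟨by rw [hB, h1, mul_zero], fun i => ?_⟩
    have := hBj i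
    rw [hPall i, mul_zero] at this
    exact (mul_eq_zero.mp this).resolve_left hyne
  · rintro ⟨h1, h2⟩
    rw [hB] at h1
    have hA0 : u + y * f = 0 :=
      (mul_eq_zero.mp h1).resolve_left (pow_ne_zero _ hyne)
    have hPall : ∀ j, uj j + y * fj j = 0 := by
      intro j
      have := hBj j
      rw [h2 j, mul_zero] at this
      exact (mul_eq_zero.mp this.symm).resolve_left (pow_ne_zero _ hyne)
    have hf0 : f = 0 := by
      have hs : ∑ j, β j * (uj j + y * fj j) = 0 := by
        refine Finset.sum_eq_zero fun j _ => ?_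
        rw [hPall j, mul_zero]
      rw [heuler, hA0, mul_zero, zero_add] at hs
      exact (mul_eq_zero.mp hs).resolve_left hyne
    refine ⟨by rw [hA, hA0], fun j => ?_⟩
    by_cases hj : j = Fin.last n
    · rw [hj, hAlast]; exact hf0
    · rw [hAj j hj]; exact hPall j
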